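/- Let G act linearly and isometrically on a Hilbert space M, X = t₀ + σε with E(ε) = 0, E‖ε‖² = 1, and let p be the orthogonal projection onto the closed subspace Fix(M) of fixed points. Then ν := E(sup_{g∈G} ⟨g·ε, t₀⟩)/‖t₀‖ satisfies ν ≤ dist(t₀/‖t₀‖, Fix(M)) · E‖ε‖, where dist(x, Fix(M)) = ‖x − p(x)‖. -/

import Mathlib

open MeasureTheory

/-- Upper bound on `ν`: `ν = E(sup_g ⟨g•ε, t₀⟩)/‖t₀‖ ≤ dist(t₀/‖t₀‖, Fix(M)) ·
E‖ε‖`. -/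
theorem stmt13 {M G Ω : Type*} [NormedAddCommGroup M] [InnerProductSpace ℝ M]
    [CompleteSpace M] [Group G] [MulAction G M] [MeasurableSpace Ω]
    (μ : Measure Ω) [IsProbabilityMeasure μ]
    (hlin : ∀ g : G, IsLinearMap ℝ fun x : M => g • x)
    (hiso : ∀ (g : G) (x : M), ‖g • x‖ = ‖x‖)
    (ε : Ω → M) (t₀ : M) (ht₀ : t₀ ≠ 0) (σ : ℝ) (hσ : 0 < σ)
    (hεint : Integrable ε μ) (hεmean : ∫ ω, ε ω ∂μ = 0)
    (hε2 : (∫ ω, ‖ε ω‖ ^ 2 ∂μ) = 1)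
    (hε2int : Integrable (fun ω => ‖ε ω‖ ^ 2) μ)
    (hε1 : Integrable (fun ω => ‖ε ω‖) μ)
    (hbdd : ∀ ω, BddAbove (Set.range fun g : G => (inner ℝ (g • ε ω) t₀ : ℝ)))
    (hsup : Integrable (fun ω => ⨆ g : G, (inner ℝ (g • ε ω) t₀ : ℝ)) μ) :
    (∫ ω, ⨆ g : G, (inner ℝ (g • ε ω) t₀ : ℝ) ∂μ) / ‖t₀‖
      ≤ Metric.infDist (‖t₀‖⁻¹ • t₀) {x : M | ∀ g : G, g • x = x}
          * ∫ ω, ‖ε ω‖ ∂μ := by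
  set S : Set M := {x : M | ∀ g : G, g • x = x} with hS
  have hnorm_pos : (0 : ℝ) < ‖t₀‖ := norm_pos_iff.mpr ht₀
  -- linear isometry for each g
  have hinner : ∀ (g : G) (x y : M), (inner ℝ (g • x) (g • y) : ℝ) = inner ℝ x y := by
    intro g x y
    exact (LinearIsometry.inner_map_map
      ⟨IsLinearMap.mk' _ (hlin g), hiso g⟩ x y)
  have hzero_mem : (0 : M) ∈ S := fun g => (hlin g).map_zero
  have hSne : S.Nonempty := ⟨0, hzero_mem⟩
  -- fixed vectors: ⟨g • x, f⟩ = ⟨x, f⟩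
  have hfix : ∀ (g : G) (x : M) (f : M), f ∈ S → (inner ℝ (g • x) f : ℝ) = inner ℝ x f := by
    intro g x f hf
    conv_lhs => rw [← hf g]
    exact hinner g x f
  -- pointwise bound
  have hpt : ∀ f ∈ S, ∀ ω, (⨆ g : G, (inner ℝ (g • ε ω) t₀ : ℝ))
      ≤ ‖ε ω‖ * ‖t₀ - f‖ + inner ℝ (ε ω) f := by
    intro f hf ω
    refine ciSup_le fun g => ?_
    have h1 : (inner ℝ (g • ε ω) t₀ : ℝ) = inner ℝ (g • ε ω) (t₀ - f) + inner ℝ (ε ω) f := by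
      rw [inner_sub_right, hfix g (ε ω) f hf]; ring
    rw [h1]
    have h2 : (inner ℝ (g • ε ω) (t₀ - f) : ℝ) ≤ ‖g • ε ω‖ * ‖t₀ - f‖ :=
      real_inner_le_norm _ _
    rw [hiso g (ε ω)] at h2
    linarith
  -- integrability of inner with fixed f
  have hinner_int : ∀ f : M, Integrable (fun ω => (inner ℝ (ε ω) f : ℝ)) μ := by
    intro f
    have := (innerSL ℝ f).integrable_comp hεint
    simpa [real_inner_comm] using this
  -- integrated bound
  have hint : ∀ f ∈ S, (∫ ω, ⨆ g : G, (inner ℝ (g • ε ω) t₀ : ℝ) ∂μ)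
      ≤ ‖t₀ - f‖ * ∫ ω, ‖ε ω‖ ∂μ := by
    intro f hf
    have h1 : (∫ ω, ⨆ g : G, (inner ℝ (g • ε ω) t₀ : ℝ) ∂μ)
        ≤ ∫ ω, (‖ε ω‖ * ‖t₀ - f‖ + inner ℝ (ε ω) f) ∂μ :=
      integral_mono hsup ((hε1.mul_const _).add (hinner_int f)) (hpt f hf)
    have h2 : (∫ ω, (‖ε ω‖ * ‖t₀ - f‖ + inner ℝ (ε ω) f) ∂μ)
        = (∫ ω, ‖ε ω‖ ∂μ) * ‖t₀ - f‖ + ∫ ω, (inner ℝ (ε ω) f : ℝ) ∂μ := by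
      rw [integral_add (hε1.mul_const _) (hinner_int f), integral_mul_const]
    have h3 : (∫ ω, (inner ℝ (ε ω) f : ℝ) ∂μ) = 0 := by
      have hc : (∫ ω, (inner ℝ (ε ω) f : ℝ) ∂μ) = ∫ ω, (inner ℝ f (ε ω) : ℝ) ∂μ := by
        congr 1; funext ω; exact real_inner_comm _ _
      rw [hc, integral_inner hεint f, hεmean, inner_zero_right]
    rw [h2, h3] at h1
    linarith [h1]
  have hI_nonneg : (0 : ℝ) ≤ ∫ ω, ‖ε ω‖ ∂μ :=
    integral_nonneg fun ω => norm_nonneg _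
  rcases eq_or_lt_of_le hI_nonneg with hI0 | hIpos
  · -- E‖ε‖ = 0 : then ε = 0 a.e., sup = 0 a.e.
    have hae : ∀ᵐ ω ∂μ, ‖ε ω‖ = 0 := by
      have := (integral_eq_zero_iff_of_nonneg (fun ω => norm_nonneg (ε ω)) hε1).mp hI0.symm
      filter_upwards [this] with ω hω using hω
    have hsup0 : (∫ ω, ⨆ g : G, (inner ℝ (g • ε ω) t₀ : ℝ) ∂μ) = 0 := by
      rw [show (0:ℝ) = ∫ _, (0:ℝ) ∂μ by simp]
      refine integral_congr_ae ?_
      filter_upwards [hae] with ω hω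
      have hε0 : ε ω = 0 := norm_eq_zero.mp hω
      have : ∀ g : G, (inner ℝ (g • ε ω) t₀ : ℝ) = 0 := by
        intro g
        rw [hε0, (hlin g).map_zero, inner_zero_left]
      simp only [this, ciSup_const]
    rw [hsup0, ← hI0, mul_zero, zero_div]
  · -- E‖ε‖ > 0
    rw [div_le_iff₀ hnorm_pos]
    have key : (∫ ω, ⨆ g : G, (inner ℝ (g • ε ω) t₀ : ℝ) ∂μ) / ((∫ ω, ‖ε ω‖ ∂μ) * ‖t₀‖)
        ≤ Metric.infDist (‖t₀‖⁻¹ • t₀) S := by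
      rw [Metric.infDist_eq_iInf]
      have : Nonempty S := hSne.to_subtype
      refine le_ciInf fun ⟨h, hh⟩ => ?_
      have hfS : ‖t₀‖ • h ∈ S := by
        intro g
        rw [(hlin g).map_smul, hh g]
      have h1 := hint _ hfS
      have h2 : ‖t₀ - ‖t₀‖ • h‖ = ‖t₀‖ * ‖‖t₀‖⁻¹ • t₀ - h‖ := by
        rw [show t₀ - ‖t₀‖ • h = ‖t₀‖ • (‖t₀‖⁻¹ • t₀ - h) by
          rw [smul_sub, smul_inv_smul₀ hnorm_pos.ne'], norm_smul,
          Real.norm_of_nonneg hnorm_pos.le]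
      rw [h2] at h1
      rw [div_le_iff₀ (by positivity)]
      rw [dist_eq_norm]
      nlinarith [h1]
    rw [div_le_iff₀ (by positivity)] at key
    nlinarith [key]
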